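/- Let H : ℕ → ℕ be strictly increasing with positive values, and for each m let γ_m ∈ (0,1) be the unique root of ∑_{i≥m} x^{H_i} = 1. Then the sequence (γ_m) is strictly increasing. -/
import Mathlib

private lemma summable_aux (H : ℕ → ℕ) (hmono : StrictMono H) (m : ℕ) {x : ℝ}
    (hx0 : 0 < x) (hx1 : x < 1) : Summable (fun i : ℕ => x ^ H (m + i)) := by
  have hg : Summable (fun i : ℕ => x ^ (m + i)) :=
    ((summable_geometric_of_lt_one hx0.le hx1).mul_left (x ^ m)).congr
      (fun i => by rw [← pow_add])
  exact Summable.of_nonneg_of_le (fun i => by positivity)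
    (fun i => pow_le_pow_of_le_one hx0.le hx1.le hmono.le_apply) hg

theorem roots_strictMono (H : ℕ → ℕ) (hmono : StrictMono H) (hpos : ∀ i, 1 ≤ H i)
    (γ : ℕ → ℝ) (hγ : ∀ m, γ m ∈ Set.Ioo (0 : ℝ) 1 ∧ ∑' i : ℕ, (γ m) ^ H (m + i) = 1) :
    StrictMono γ := by
  apply strictMono_nat_of_lt_succ
  intro m
  obtain ⟨⟨h0, h1⟩, hsum⟩ := hγ m
  obtain ⟨⟨h0', h1'⟩, hsum'⟩ := hγ (m + 1)
  by_contra hle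
  push_neg at hle
  -- split the sum for m
  have hS := summable_aux H hmono m h0 h1
  have hsplit : (∑' i : ℕ, (γ m) ^ H (m + i)) =
      (γ m) ^ H m + ∑' i : ℕ, (γ m) ^ H (m + 1 + i) := by
    rw [Summable.tsum_eq_zero_add hS, Nat.add_zero]
    exact congrArg _ (tsum_congr fun i => by rw [show m + (i + 1) = m + 1 + i by omega])
  have htail_lt : (∑' i : ℕ, (γ m) ^ H (m + 1 + i)) < 1 := by
    have hp : (0:ℝ) < (γ m) ^ H m := by positivity
    linarith [hsplit ▸ hsum]
  -- monotonicity: γ (m+1) ≤ γ m ⇒ sum at γ(m+1) ≤ sum at γ m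
  have hmono_sum : (∑' i : ℕ, (γ (m+1)) ^ H (m + 1 + i)) ≤
      ∑' i : ℕ, (γ m) ^ H (m + 1 + i) := by
    apply Summable.tsum_le_tsum _ (summable_aux H hmono (m+1) h0' h1')
      (summable_aux H hmono (m+1) h0 h1)
    intro i
    exact pow_le_pow_left₀ h0'.le hle _
  linarith [hsum']
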